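/- Let (G,f) be an n-ary group. If every fuzzy n-ary subgroup of (G,f) has a finite image, then every strictly descending chain of n-ary subgroups of G terminates at a finite step (i.e., there is no infinite strictly descending chain G = S_0 ⊃ S_1 ⊃ S_2 ⊃ ... of n-ary subgroups). -/

import Mathlib

open Classical

variable {G : Type*}

/-- The composition appearing in the (i,j)-associativity law: apply `f` to the
sequence `x : Fin (2n-1) → G` with an inner application of `f` starting at position `i`. -/
def nAryComp {n : ℕ} (f : (Fin n → G) → G) (i : Fin n) (x : Fin (2 * n - 1) → G) : G :=
  f (fun k => if (k : ℕ) < (i : ℕ) then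
        x ⟨(k : ℕ), by have hk := k.isLt; omega⟩
      else if (k : ℕ) = (i : ℕ) then
        f (fun m => x ⟨(i : ℕ) + (m : ℕ), by have hi := i.isLt; have hm := m.isLt; omega⟩)
      else x ⟨(k : ℕ) + n - 1, by have hk := k.isLt; omega⟩)

/-- `(G, f)` is an `n`-ary group: `f` is associative and all equations are uniquely solvable. -/
structure IsNAryGroup (n : ℕ) (f : (Fin n → G) → G) : Prop where
  assoc : ∀ (i j : Fin n) (x : Fin (2 * n - 1) → G), nAryComp f i x = nAryComp f j x
  solv : ∀ (i : Fin n) (x : Fin n → G) (x₀ : G), ∃! z : G, f (Function.update x i z) = x₀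

/-- `y` is the skew element of `x`: `f(x,...,x,y) = x` with `x` repeated `n-1` times. -/
def IsSkew {n : ℕ} (f : (Fin n → G) → G) (x y : G) : Prop :=
  f (fun k => if (k : ℕ) = n - 1 then y else x) = x

/-- `H` is an `n`-ary subgroup of `(G,f)`. -/
def IsNArySubgroup {n : ℕ} (f : (Fin n → G) → G) (H : Set G) : Prop :=
  H.Nonempty ∧ (∀ x : Fin n → G, (∀ i, x i ∈ H) → f x ∈ H) ∧
    ∀ x y : G, x ∈ H → IsSkew f x y → y ∈ H

/-- `μ` is a fuzzy `n`-ary subgroup of `(G,f)`. -/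
def IsFuzzyNArySubgroup {n : ℕ} (f : (Fin n → G) → G) (μ : G → ℝ) : Prop :=
  (∀ x : Fin n → G, (⨅ i, μ (x i)) ≤ μ (f x)) ∧
    ∀ x y : G, IsSkew f x y → μ x ≤ μ y

/-- If every fuzzy `n`-ary subgroup of `(G,f)` has a finite image, then there is no infinite
strictly descending chain `G = S₀ ⊃ S₁ ⊃ S₂ ⊃ ...` of `n`-ary subgroups of `G`. -/
theorem stmt15 [Nonempty G] {n : ℕ} (hn : 2 ≤ n)
    (f : (Fin n → G) → G) (hf : IsNAryGroup n f)
    (hfin : ∀ μ : G → ℝ, (∀ x, μ x ∈ Set.Icc (0 : ℝ) 1) → IsFuzzyNArySubgroup f μ →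
      (Set.range μ).Finite) :
    ¬ ∃ S : ℕ → Set G, S 0 = Set.univ ∧ (∀ k, IsNArySubgroup f (S k)) ∧
      ∀ k, S (k + 1) ⊂ S k := by
  rintro ⟨S, hS0, hSub, hchain⟩
  haveI : Nonempty (Fin n) := ⟨⟨0, by omega⟩⟩
  -- monotonicity of the chain
  have hmono : ∀ j k : ℕ, j ≤ k → S k ⊆ S j := by
    intro j k hjk
    induction k with
    | zero =>
      have : j = 0 := Nat.le_zero.mp hjk
      subst this; exact subset_rfl
    | succ k ih =>
      rcases Nat.lt_or_ge j (k + 1) with h | h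
      · exact ((hchain k).1).trans (ih (Nat.lt_succ_iff.mp h))
      · have : j = k + 1 := le_antisymm hjk h
        subst this; exact subset_rfl
  set m : G → ℕ := fun x => sInf {k | x ∉ S k} with hm_def
  have hm_mem : ∀ x : G, ¬(∀ k, x ∈ S k) → x ∉ S (m x) := by
    intro x h
    push_neg at h
    exact Nat.sInf_mem h
  have hm_lt : ∀ (x : G) (k : ℕ), k < m x → x ∈ S k := by
    intro x k hk
    by_contra hc
    exact absurd hc (Nat.notMem_of_lt_sInf hk)
  have hm_le : ∀ (x : G) (k : ℕ), x ∉ S k → m x ≤ k := fun x k hk => Nat.sInf_le hk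
  have hm_pos : ∀ x : G, ¬(∀ k, x ∈ S k) → 1 ≤ m x := by
    intro x h
    rcases Nat.eq_zero_or_pos (m x) with h0 | h1
    · exfalso
      have := hm_mem x h
      rw [h0, hS0] at this
      exact this (Set.mem_univ x)
    · exact h1
  set μ : G → ℝ := fun x => if ∀ k, x ∈ S k then (1 : ℝ) else 1 - 1 / (m x : ℝ) with hμ_def
  -- key characterization
  have L : ∀ (x : G) (k : ℕ), x ∈ S k ↔ 1 - 1 / ((k : ℝ) + 1) ≤ μ x := by
    intro x k
    by_cases h : ∀ j, x ∈ S j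
    · simp only [hμ_def, if_pos h]
      constructor
      · intro _
        have : (0 : ℝ) < (k : ℝ) + 1 := by positivity
        have : (0 : ℝ) ≤ 1 / ((k : ℝ) + 1) := by positivity
        linarith
      · intro _; exact h k
    · simp only [hμ_def, if_neg h]
      have hpos : (1 : ℝ) ≤ (m x : ℝ) := by exact_mod_cast hm_pos x h
      constructor
      · intro hxk
        have hk : k < m x := by
          by_contra hc
          push_neg at hc
          exact hm_mem x h (hmono (m x) k hc hxk)
        have h1 : (k : ℝ) + 1 ≤ (m x : ℝ) := by exact_mod_cast hk
        have h2 : (1 : ℝ) / (m x : ℝ) ≤ 1 / ((k : ℝ) + 1) :=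
          one_div_le_one_div_of_le (by positivity) h1
        linarith
      · intro hle
        have h2 : (1 : ℝ) / (m x : ℝ) ≤ 1 / ((k : ℝ) + 1) := by linarith
        have h3 : (k : ℝ) + 1 ≤ (m x : ℝ) := by
          have hk1 : (0 : ℝ) < (k : ℝ) + 1 := by positivity
          have hm1 : (0 : ℝ) < (m x : ℝ) := by linarith
          rw [div_le_div_iff₀ hm1 hk1] at h2
          linarith
        have : k < m x := by exact_mod_cast Nat.lt_of_succ_le (by exact_mod_cast h3)
        exact hm_lt x k this
  -- monotonicity lemma
  have M : ∀ y z : G, (∀ k, y ∈ S k → z ∈ S k) → μ y ≤ μ z := by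
    intro y z hyz
    by_cases hy : ∀ k, y ∈ S k
    · have hz : ∀ k, z ∈ S k := fun k => hyz k (hy k)
      simp only [hμ_def, if_pos hy, if_pos hz, le_refl]
    · have h1 : 1 ≤ m y := hm_pos y hy
      have hk : m y - 1 < m y := by omega
      have hyk : y ∈ S (m y - 1) := hm_lt y _ hk
      have hzk : z ∈ S (m y - 1) := hyz _ hyk
      have := (L z (m y - 1)).mp hzk
      have hcast : ((m y - 1 : ℕ) : ℝ) + 1 = (m y : ℝ) := by
        have : ((m y - 1 : ℕ) : ℝ) = (m y : ℝ) - 1 := by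
          push_cast [Nat.cast_sub h1]; ring
        rw [this]; ring
      rw [hcast] at this
      simp only [hμ_def, if_neg hy]
      exact this
  -- μ bounds
  have hbd : ∀ x, μ x ∈ Set.Icc (0 : ℝ) 1 := by
    intro x
    by_cases h : ∀ k, x ∈ S k
    · simp [hμ_def, if_pos h]
    · simp only [hμ_def, if_neg h, Set.mem_Icc]
      have hpos : (1 : ℝ) ≤ (m x : ℝ) := by exact_mod_cast hm_pos x h
      have h1 : (0 : ℝ) < (m x : ℝ) := by linarith
      have h2 : (1 : ℝ) / (m x : ℝ) ≤ 1 := by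
        rw [div_le_one h1]; linarith
      have h3 : (0 : ℝ) ≤ 1 / (m x : ℝ) := by positivity
      constructor <;> linarith
  -- μ is a fuzzy n-ary subgroup
  have hfuz : IsFuzzyNArySubgroup f μ := by
    constructor
    · intro x
      obtain ⟨i₀, hi₀⟩ := Finite.exists_min (fun i => μ (x i))
      have h1 : (⨅ i, μ (x i)) ≤ μ (x i₀) := by
        apply ciInf_le
        exact ⟨0, by rintro r ⟨i, rfl⟩; exact (hbd (x i)).1⟩
      refine h1.trans (M (x i₀) (f x) ?_)
      intro k hk
      apply (hSub k).2.1
      intro i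
      exact (L (x i) k).mpr (le_trans ((L (x i₀) k).mp hk) (hi₀ i))
    · intro x y hxy
      exact M x y (fun k hk => (hSub k).2.2 x y hk hxy)
  have hfinμ := hfin μ hbd hfuz
  -- pick elements witnessing strict descent
  have hc : ∀ k, ∃ x, x ∈ S k ∧ x ∉ S (k + 1) := by
    intro k
    obtain ⟨x, hx1, hx2⟩ := Set.exists_of_ssubset (hchain k)
    exact ⟨x, hx1, hx2⟩
  choose c hc1 hc2 using hc
  have hμc : ∀ k, μ (c k) = 1 - 1 / ((k : ℝ) + 1) := by
    intro k
    have hnall : ¬(∀ j, c k ∈ S j) := fun h => hc2 k (h (k + 1))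
    have hme : m (c k) = k + 1 := by
      have h1 : m (c k) ≤ k + 1 := hm_le _ _ (hc2 k)
      have h2 : k < m (c k) := by
        by_contra hlt
        push_neg at hlt
        exact hm_mem (c k) hnall (hmono (m (c k)) k hlt (hc1 k))
      omega
    simp only [hμ_def, if_neg hnall, hme]
    push_cast; ring
  have hinj : Function.Injective (fun k => μ (c k)) := by
    intro j k hjk
    simp only [hμc] at hjk
    have h1 : 1 / ((j : ℝ) + 1) = 1 / ((k : ℝ) + 1) := by linarith
    field_simp at h1
    exact_mod_cast (by linarith : (j : ℝ) = k)
  have : (Set.range μ).Infinite :=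
    Set.infinite_of_injective_forall_mem hinj (fun k => ⟨c k, rfl⟩)
  exact this hfinμ
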